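/- Suppose X is a k-large simplicial complex and S¹_m denotes the triangulation of the circle S¹ with m edges. If m < k, then every simplicial map f : S¹_m → X extends to a simplicial map from the disc D², triangulated so that the triangulation of its boundary is S¹_m and so that D² has no interior vertices. -/

import Mathlib

open Set Topology
open scoped Classical

noncomputable section

/-! ## Combinatorial 2-complexes

We model a combinatorial 2-complex on a topological space `α` by recording its
set of 0-cells (vertices) and its sets of closed 1-cells and closed 2-cells,
each regarded as subsets of `α`. -/

structure TwoComplexOn (α : Type*) [TopologicalSpace α] : Type _ where
  cell0 : Set α
  cell1 : Set (Set α)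
  cell2 : Set (Set α)

namespace TwoComplexOn

variable {α : Type*} [TopologicalSpace α]

/-- The underlying set of the 1-skeleton. -/
def oneSkeleton (X : TwoComplexOn α) : Set α := X.cell0 ∪ ⋃₀ X.cell1

/-- The underlying set of the whole complex. -/
def support (X : TwoComplexOn α) : Set α := X.cell0 ∪ ⋃₀ X.cell1 ∪ ⋃₀ X.cell2

/-- A *piece* of `X`: the image of a nontrivial combinatorial path (a connected
subcomplex of the 1-skeleton containing at least one 1-cell) that is contained
in the boundaries of two distinct 2-cells of `X`. -/
def IsPiece (X : TwoComplexOn α) (p : Set α) : Prop :=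
  IsConnected p ∧ p ⊆ X.oneSkeleton ∧ (∃ e ∈ X.cell1, e ⊆ p) ∧
    ∃ R₁ ∈ X.cell2, ∃ R₂ ∈ X.cell2, R₁ ≠ R₂ ∧ p ⊆ frontier R₁ ∧ p ⊆ frontier R₂

/-- The small cancellation condition `C(p)`: the boundary of a 2-cell is never
a concatenation of fewer than `p` pieces; equivalently, the boundary of a
2-cell cannot be covered by fewer than `p` pieces. -/
def SatC (X : TwoComplexOn α) (p : ℕ) : Prop :=
  ∀ R ∈ X.cell2, ∀ P : Finset (Set α), (∀ q ∈ P, X.IsPiece q) →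
    frontier R ⊆ ⋃₀ ↑P → p ≤ P.card

/-- The valence of a 0-cell: the number of 1-cells incident to it. -/
def valence (X : TwoComplexOn α) (v : α) : ℕ := {e ∈ X.cell1 | v ∈ e}.ncard

/-- `E` is a subcomplex of `X`. -/
def Subcomplex (E X : TwoComplexOn α) : Prop :=
  E.cell0 ⊆ X.cell0 ∧ E.cell1 ⊆ X.cell1 ∧ E.cell2 ⊆ X.cell2

/-- The 2-cells of `X` distinct from `F` meeting `F`. -/
def neighbors (X : TwoComplexOn α) (F : Set α) : Set (Set α) :=
  {F' | F' ∈ X.cell2 ∧ F' ≠ F ∧ (F ∩ F').Nonempty}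

/-- A gallery: a sequence of pairwise distinct 2-cells in which consecutive
2-cells intersect. -/
def IsGallery (X : TwoComplexOn α) (l : List (Set α)) : Prop :=
  l ≠ [] ∧ l.Nodup ∧ (∀ F ∈ l, F ∈ X.cell2) ∧
    l.Chain' (fun F F' => (F ∩ F').Nonempty)

/-- The gallery distance between two 2-cells: the least number of 2-cells in a
gallery joining them. -/
noncomputable def galleryDist (X : TwoComplexOn α) (F F' : Set α) : ℕ :=
  sInf {n | ∃ l : List (Set α), X.IsGallery l ∧ l.length = n ∧
    l.head? = some F ∧ l.getLast? = some F'}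

end TwoComplexOn

/-- A combinatorial map between 2-complexes. -/
structure CombMap {α β : Type*} [TopologicalSpace α] [TopologicalSpace β]
    (X : TwoComplexOn α) (Y : TwoComplexOn β) where
  toFun : α → β
  continuous : Continuous toFun
  map0 : ∀ v ∈ X.cell0, toFun v ∈ Y.cell0
  map1 : ∀ e ∈ X.cell1, toFun '' e ∈ Y.cell1
  map2 : ∀ f ∈ X.cell2, toFun '' f ∈ Y.cell2

/-- A disc diagram: a contractible finite 2-complex with a specified embedding
into the plane. -/
structure DiscDiagram : Type 1 where
  carrier : Type
  top : TopologicalSpace carrier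
  complex : @TwoComplexOn carrier top
  finite0 : complex.cell0.Finite
  finite1 : complex.cell1.Finite
  finite2 : complex.cell2.Finite
  contractible : @ContractibleSpace carrier top
  embed : carrier → ℝ × ℝ
  embedding : @Topology.IsEmbedding carrier (ℝ × ℝ) top _ embed

attribute [instance] DiscDiagram.top

/-- A 0-cell of a disc diagram is internal if its image lies in the interior of
the image of the diagram in the plane. -/
def DiscDiagram.Internal (D : DiscDiagram) (v : D.carrier) : Prop :=
  D.embed v ∈ interior (Set.range D.embed)

/-- The small cancellation condition `T(q)`: no reduced disc diagram over `X`
has an internal 0-cell `v` with `2 < δ(v) < q`. -/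
def TwoComplexOn.SatT {α : Type*} [TopologicalSpace α] (X : TwoComplexOn α) (q : ℕ) : Prop :=
  ∀ (D : DiscDiagram) (φ : CombMap D.complex X),
    (∀ p, D.complex.IsPiece p → X.IsPiece (φ.toFun '' p)) →
    ∀ v ∈ D.complex.cell0, D.Internal v →
      ¬(2 < D.complex.valence v ∧ D.complex.valence v < q)

/-! ## Actions on 2-complexes -/

/-- An action of an (additive) group `G` on the complex `X` by cellular
automorphisms, given by a homomorphism-like family of homeomorphisms. -/
def IsCellularAction {α : Type*} [TopologicalSpace α] {G : Type*} [AddGroup G]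
    (X : TwoComplexOn α) (ρ : G → α ≃ₜ α) : Prop :=
  (∀ g h : G, ρ (g + h) = (ρ g).trans (ρ h)) ∧
  (∀ g : G, ∀ v ∈ X.cell0, ρ g v ∈ X.cell0) ∧
  (∀ g : G, ∀ e ∈ X.cell1, ⇑(ρ g) '' e ∈ X.cell1) ∧
  (∀ g : G, ∀ F ∈ X.cell2, ⇑(ρ g) '' F ∈ X.cell2)

/-- A subcomplex is invariant under the action `ρ`. -/
def InvariantSubcomplex {α : Type*} [TopologicalSpace α] {G : Type*}
    (E : TwoComplexOn α) (ρ : G → α ≃ₜ α) : Prop :=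
  ∀ g : G, (∀ v ∈ E.cell0, ρ g v ∈ E.cell0) ∧
    (∀ e ∈ E.cell1, ⇑(ρ g) '' e ∈ E.cell1) ∧
    (∀ F ∈ E.cell2, ⇑(ρ g) '' F ∈ E.cell2)

/-- Proper action: every compact set meets only finitely many of its translates. -/
def ProperAction {α : Type*} [TopologicalSpace α] {G : Type*} (ρ : G → α ≃ₜ α) : Prop :=
  ∀ K : Set α, IsCompact K → {g : G | (⇑(ρ g) '' K ∩ K).Nonempty}.Finite

/-- Metrically proper action: every bounded set meets only finitely many of its
translates. -/
def MetricallyProperAction {α : Type*} [MetricSpace α] {G : Type*}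
    (ρ : G → α ≃ₜ α) : Prop :=
  ∀ B : Set α, Bornology.IsBounded B → {g : G | (⇑(ρ g) '' B ∩ B).Nonempty}.Finite

/-- Semisimple action: every element attains its translation length. -/
def SemisimpleAction {α : Type*} [MetricSpace α] {G : Type*} (ρ : G → α ≃ₜ α) : Prop :=
  ∀ g : G, ∃ x : α, dist x (ρ g x) = ⨅ y : α, dist y (ρ g y)

/-! ## The Euclidean plane and its triangular tiling -/

/-- The Euclidean plane. -/
abbrev EPlane : Type := EuclideanSpace ℝ (Fin 2)

/-- The vertices of the standard unit equilateral triangular tiling `E²_△`. -/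
noncomputable def triPoint (z : ℤ × ℤ) : EPlane :=
  (WithLp.toLp 2 ![(z.1 : ℝ) + (z.2 : ℝ) / 2, (z.2 : ℝ) * (Real.sqrt 3 / 2)] : EuclideanSpace ℝ (Fin 2))

def triVertices : Set EPlane := Set.range triPoint

def triEdges : Set (Set EPlane) :=
  {e | ∃ u ∈ triVertices, ∃ v ∈ triVertices, dist u v = 1 ∧ e = segment ℝ u v}

def triFaces : Set (Set EPlane) :=
  {f | ∃ u ∈ triVertices, ∃ v ∈ triVertices, ∃ w ∈ triVertices,
    dist u v = 1 ∧ dist v w = 1 ∧ dist u w = 1 ∧ f = convexHull ℝ {u, v, w}}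

/-- A flat in a `C(3)-T(6)` complex: an isometric embedding of the standard
equilateral triangular tiling of the Euclidean plane, sending cells to cells. -/
def IsFlat36 {α : Type*} [MetricSpace α] (X : TwoComplexOn α) (f : EPlane → α) : Prop :=
  Isometry f ∧ (∀ v ∈ triVertices, f v ∈ X.cell0) ∧
    (∀ e ∈ triEdges, f '' e ∈ X.cell1) ∧ (∀ F ∈ triFaces, f '' F ∈ X.cell2)

/-- The regular Euclidean `n`-gon with unit side lengths. -/
noncomputable def regularNgon (n : ℕ) : Set EPlane :=
  convexHull ℝ (Set.range fun k : Fin n =>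
    (WithLp.toLp 2 ![(2 * Real.sin (Real.pi / n))⁻¹ * Real.cos (2 * Real.pi * k / n),
       (2 * Real.sin (Real.pi / n))⁻¹ * Real.sin (2 * Real.pi * k / n)] :
      EuclideanSpace ℝ (Fin 2)))

/-- The metric of `α` restricts on the complex `X` to the standard small
cancellation metric: every 1-cell is isometric to a unit interval and every
2-cell is isometric to a regular Euclidean polygon with unit side lengths. -/
def IsStandardMetric {α : Type*} [MetricSpace α] (X : TwoComplexOn α) : Prop :=
  (∀ e ∈ X.cell1, ∃ γ : (Set.Icc (0 : ℝ) 1) → α, Isometry γ ∧ Set.range γ = e) ∧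
  (∀ F ∈ X.cell2, ∃ n : ℕ, 3 ≤ n ∧ ∃ φ : (regularNgon n) → α, Isometry φ ∧ Set.range φ = F)

/-! ## Flat planes and flats in `C(6)` complexes -/

/-- A flat plane: a `C(6)` complex homeomorphic to the Euclidean plane in which
every closed 2-cell meets exactly six neighbouring closed 2-cells. -/
def IsFlatPlaneC6 {α : Type*} [TopologicalSpace α] (E : TwoComplexOn α) : Prop :=
  E.SatC 6 ∧ Nonempty (↥E.support ≃ₜ (ℝ × ℝ)) ∧
    ∀ F ∈ E.cell2, (E.neighbors F).ncard = 6

/-- A flat in a `C(6)` complex `X`: a flat plane contained in `X` as a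
subcomplex whose gallery distances agree with those of `X`. -/
def IsFlatC6 {α : Type*} [TopologicalSpace α] (X E : TwoComplexOn α) : Prop :=
  E.Subcomplex X ∧ IsFlatPlaneC6 E ∧
    ∀ F ∈ E.cell2, ∀ F' ∈ E.cell2, E.galleryDist F F' = X.galleryDist F F'

/-! ## Abstract simplicial complexes, largeness, systolicity -/

/-- An abstract simplicial complex on a vertex type `V`. -/
structure SimpComplex (V : Type*) where
  faces : Set (Finset V)
  down_closed : ∀ ⦃s t : Finset V⦄, s ∈ faces → t ⊆ s → t.Nonempty → t ∈ faces

namespace SimpComplex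

variable {V : Type*}

def vertices (X : SimpComplex V) : Set V := {v | {v} ∈ X.faces}

/-- Two vertices are adjacent if they span an edge. -/
def Adj (X : SimpComplex V) (u v : V) : Prop := u ≠ v ∧ ({u, v} : Finset V) ∈ X.faces

/-- A flag complex: every finite set of pairwise adjacent vertices spans a simplex. -/
def Flag (X : SimpComplex V) : Prop :=
  ∀ s : Finset V, s.Nonempty → (∀ v ∈ s, v ∈ X.vertices) →
    (∀ u ∈ s, ∀ v ∈ s, u ≠ v → ({u, v} : Finset V) ∈ X.faces) → s ∈ X.faces

/-- An (embedded) cycle of length `m` in the 1-skeleton. -/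
def IsCycle (X : SimpComplex V) (m : ℕ) (c : ZMod m → V) : Prop :=
  3 ≤ m ∧ Function.Injective c ∧ ∀ i, X.Adj (c i) (c (i + 1))

/-- The cycle `c` has a diagonal: an edge joining two nonconsecutive vertices. -/
def HasDiagonal (X : SimpComplex V) (m : ℕ) (c : ZMod m → V) : Prop :=
  ∃ i j : ZMod m, j ≠ i - 1 ∧ j ≠ i ∧ j ≠ i + 1 ∧ X.Adj (c i) (c j)

/-- `k`-largeness: flag, and every cycle of length less than `k` has a diagonal.
(Cycles of length `3` are excluded: they have no pair of nonconsecutive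
vertices, and their triangles are provided by flagness.) -/
def IsLarge (X : SimpComplex V) (k : ℕ) : Prop :=
  X.Flag ∧ ∀ m : ℕ, 4 ≤ m → m < k →
    ∀ c : ZMod m → V, X.IsCycle m c → X.HasDiagonal m c

/-- The link of a vertex. -/
def link (X : SimpComplex V) (v : V) : SimpComplex V where
  faces := {s | v ∉ s ∧ insert v s ∈ X.faces}
  down_closed := by
    intro s t hs hts ht
    refine ⟨fun hv => hs.1 (hts hv), X.down_closed hs.2 ?_ ⟨v, Finset.mem_insert_self v t⟩⟩
    exact Finset.insert_subset_insert v hts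

/-- An edge path in the 1-skeleton. -/
def IsEdgePath (X : SimpComplex V) (l : List V) : Prop :=
  (∀ v ∈ l, ({v} : Finset V) ∈ X.faces) ∧ l.Chain' X.Adj

/-- Elementary (combinatorial) homotopy of edge paths: removing backtracks and
pushing across triangles.  For simplicial complexes this generates the same
equivalence as topological homotopy of paths in the geometric realization. -/
inductive Homotopic (X : SimpComplex V) : List V → List V → Prop
  | refl (l : List V) : Homotopic X l l
  | symm {l₁ l₂ : List V} : Homotopic X l₁ l₂ → Homotopic X l₂ l₁
  | trans {l₁ l₂ l₃ : List V} : Homotopic X l₁ l₂ → Homotopic X l₂ l₃ → Homotopic X l₁ l₃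
  | backtrack (l₁ l₂ : List V) (u v : V) :
      Homotopic X (l₁ ++ u :: v :: u :: l₂) (l₁ ++ u :: l₂)
  | triangle (l₁ l₂ : List V) (u v w : V) (h : ({u, v, w} : Finset V) ∈ X.faces) :
      Homotopic X (l₁ ++ u :: v :: w :: l₂) (l₁ ++ u :: w :: l₂)

/-- Combinatorial simple connectivity: connected, and every edge loop
contracts to a point. -/
def SimplyConnected (X : SimpComplex V) : Prop :=
  (∀ u ∈ X.vertices, ∀ v ∈ X.vertices, ∃ l : List V,
      X.IsEdgePath l ∧ l.head? = some u ∧ l.getLast? = some v) ∧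
  (∀ (u : V) (l : List V), X.IsEdgePath l → l.head? = some u → l.getLast? = some u →
      X.Homotopic l [u])

/-- A systolic complex: simply connected with `6`-large vertex links. -/
def Systolic (X : SimpComplex V) : Prop :=
  X.SimplyConnected ∧ ∀ v ∈ X.vertices, (X.link v).IsLarge 6

/-- The graph metric on the 1-skeleton (number of edges of a shortest edge
path). -/
noncomputable def dist (X : SimpComplex V) (u v : V) : ℕ :=
  sInf {n | ∃ l : List V, X.IsEdgePath l ∧ l.length = n + 1 ∧
    l.head? = some u ∧ l.getLast? = some v}

end SimpComplex

/-- The 1-skeleton of the standard equilateral triangulation `E²_△` of the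
plane, as a graph on `ℤ × ℤ` (the triangular lattice). -/
def triLattice : SimpleGraph (ℤ × ℤ) where
  Adj p q := (q.1 - p.1) ^ 2 + (q.1 - p.1) * (q.2 - p.2) + (q.2 - p.2) ^ 2 = 1
  symm := by
    constructor
    intro p q h
    have : (p.1 - q.1) ^ 2 + (p.1 - q.1) * (p.2 - q.2) + (p.2 - q.2) ^ 2
        = (q.1 - p.1) ^ 2 + (q.1 - p.1) * (q.2 - p.2) + (q.2 - p.2) ^ 2 := by ring
    rw [this]; exact h
  loopless := by constructor; intro p h; simp at h

/-- The 1-skeleton of the standard square tiling `E²_□` of the plane, as a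
graph on `ℤ × ℤ` (the square lattice). -/
def squareLattice : SimpleGraph (ℤ × ℤ) where
  Adj p q := (q.1 - p.1) ^ 2 + (q.2 - p.2) ^ 2 = 1
  symm := by
    constructor
    intro p q h
    have : (p.1 - q.1) ^ 2 + (p.2 - q.2) ^ 2 = (q.1 - p.1) ^ 2 + (q.2 - p.2) ^ 2 := by ring
    rw [this]; exact h
  loopless := by constructor; intro p h; simp at h

/-- A flat in a systolic complex: an isometric embedding of the 1-skeleton of
`E²_△` (with its graph metric) into the 1-skeleton of `X` (with its graph
metric). -/
def IsSystolicFlat {V : Type*} (X : SimpComplex V) (f : ℤ × ℤ → V) : Prop :=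
  (∀ z, f z ∈ X.vertices) ∧ Function.Injective f ∧
    ∀ z w : ℤ × ℤ, X.dist (f z) (f w) = triLattice.dist z w

/-- The nerve of the cover of a 2-complex by its closed 2-cells. -/
def nerve {α : Type*} [TopologicalSpace α] (X : TwoComplexOn α) : SimpComplex (Set α) where
  faces := {s | s.Nonempty ∧ (∀ F ∈ s, F ∈ X.cell2) ∧ (⋂ F ∈ s, (F : Set α)).Nonempty}
  down_closed := by
    intro s t hs hts ht
    refine ⟨ht, fun F hF => hs.2.1 F (hts hF), hs.2.2.mono ?_⟩
    intro x hx
    exact Set.mem_iInter₂.2 fun F hF => Set.mem_iInter₂.1 hx F (hts hF)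

/-- The subcomplex of `X` spanned by a family `𝓔` of closed 2-cells. -/
def subcomplexGen {α : Type*} [TopologicalSpace α] (X : TwoComplexOn α)
    (𝓔 : Set (Set α)) : TwoComplexOn α where
  cell0 := {v ∈ X.cell0 | ∃ F ∈ 𝓔, v ∈ F}
  cell1 := {e ∈ X.cell1 | ∃ F ∈ 𝓔, e ⊆ F}
  cell2 := 𝓔 ∩ X.cell2
/-! ## Square complexes and quadric complexes -/

/-- A combinatorial square complex: a simple graph together with a set of
squares, each recorded as a closed combinatorial path of length 4. -/
structure SquareComplex (V : Type*) where
  graph : SimpleGraph V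
  squares : Set (ZMod 4 → V)

/-- The set of (unordered) boundary edges of a square. -/
def sqEdges {V : Type*} (c : ZMod 4 → V) : Set (Sym2 V) :=
  {e | ∃ i : ZMod 4, e = s(c i, c (i + 1))}

/-- An embedded cycle of length `m` in a graph. -/
def IsGraphCycle {V : Type*} (G : SimpleGraph V) (m : ℕ) (c : ZMod m → V) : Prop :=
  3 ≤ m ∧ Function.Injective c ∧ ∀ i, G.Adj (c i) (c (i + 1))

/-- The set of (unordered) edges of a cycle. -/
def cycEdges {V : Type*} {m : ℕ} (c : ZMod m → V) : Set (Sym2 V) :=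
  {e | ∃ i : ZMod m, e = s(c i, c (i + 1))}

namespace SquareComplex

variable {V : Type*}

/-- (A): the attaching map of every square is an immersion (a closed edge path
with no backtracking). -/
def CondA (Y : SquareComplex V) : Prop :=
  ∀ c ∈ Y.squares, (∀ i : ZMod 4, Y.graph.Adj (c i) (c (i + 1))) ∧
    ∀ i : ZMod 4, c (i - 1) ≠ c (i + 1)

/-- (B): two squares sharing at least three edges have equal boundaries. -/
def CondB (Y : SquareComplex V) : Prop :=
  ∀ c₁ ∈ Y.squares, ∀ c₂ ∈ Y.squares,
    3 ≤ (sqEdges c₁ ∩ sqEdges c₂).ncard → sqEdges c₁ = sqEdges c₂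

/-- (C): if the boundary of the union of two squares is a cycle of length 4,
then that cycle bounds a square. -/
def CondC (Y : SquareComplex V) : Prop :=
  ∀ c₁ ∈ Y.squares, ∀ c₂ ∈ Y.squares, ∀ b : ZMod 4 → V,
    IsGraphCycle Y.graph 4 b →
    cycEdges b = (sqEdges c₁ ∪ sqEdges c₂) \ (sqEdges c₁ ∩ sqEdges c₂) →
    ∃ c ∈ Y.squares, sqEdges c = cycEdges b

/-- (D): if the boundary of the union of three squares is a cycle of length 6,
then that cycle is the boundary of the union of two squares. -/
def CondD (Y : SquareComplex V) : Prop :=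
  ∀ c₁ ∈ Y.squares, ∀ c₂ ∈ Y.squares, ∀ c₃ ∈ Y.squares, ∀ b : ZMod 6 → V,
    IsGraphCycle Y.graph 6 b →
    cycEdges b = (sqEdges c₁ ∪ sqEdges c₂ ∪ sqEdges c₃) \
      ((sqEdges c₁ ∩ sqEdges c₂) ∪ (sqEdges c₁ ∩ sqEdges c₃) ∪ (sqEdges c₂ ∩ sqEdges c₃)) →
    ∃ c ∈ Y.squares, ∃ c' ∈ Y.squares,
      cycEdges b = (sqEdges c ∪ sqEdges c') \ (sqEdges c ∩ sqEdges c')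

/-- Elementary homotopy of edge paths in a square complex: removing backtracks
and pushing across squares. -/
inductive SqHomotopic (Y : SquareComplex V) : List V → List V → Prop
  | refl (l : List V) : SqHomotopic Y l l
  | symm {l₁ l₂ : List V} : SqHomotopic Y l₁ l₂ → SqHomotopic Y l₂ l₁
  | trans {l₁ l₂ l₃ : List V} :
      SqHomotopic Y l₁ l₂ → SqHomotopic Y l₂ l₃ → SqHomotopic Y l₁ l₃
  | backtrack (l₁ l₂ : List V) (u v : V) :
      SqHomotopic Y (l₁ ++ u :: v :: u :: l₂) (l₁ ++ u :: l₂)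
  | square (l₁ l₂ : List V) (c : ZMod 4 → V) (hc : c ∈ Y.squares) (i : ZMod 4) :
      SqHomotopic Y (l₁ ++ c i :: c (i + 1) :: l₂)
        (l₁ ++ c i :: c (i - 1) :: c (i + 2) :: c (i + 1) :: l₂)

/-- Combinatorial simple connectivity of a square complex. -/
def SimplyConnected (Y : SquareComplex V) : Prop :=
  Y.graph.Connected ∧ ∀ (u : V) (l : List V), l.Chain' Y.graph.Adj →
    l.head? = some u → l.getLast? = some u → SqHomotopic Y l [u]

/-- A locally quadric complex. -/
def LocallyQuadric (Y : SquareComplex V) : Prop :=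
  Y.CondA ∧ Y.CondB ∧ Y.CondC ∧ Y.CondD

/-- A quadric complex: a simply connected locally quadric complex. -/
def IsQuadric (Y : SquareComplex V) : Prop :=
  Y.SimplyConnected ∧ Y.LocallyQuadric

end SquareComplex

/-- A flat in a quadric complex: an isometric embedding of the 1-skeleton of
the standard square tiling `E²_□` (with its graph metric) into the 1-skeleton
of `Y` (with its graph metric). -/
def IsQuadricFlat {V : Type*} (Y : SquareComplex V) (f : ℤ × ℤ → V) : Prop :=
  Function.Injective f ∧ ∀ z w : ℤ × ℤ, Y.graph.dist (f z) (f w) = squareLattice.dist z w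

/-- The 1-skeleton of the quadrization of a 2-complex `X`: the bipartite graph
on `X₀ ⊔ X₂` joining a 0-cell `v` to a 2-cell `F` whenever `v ∈ ∂F`. -/
def quadGraph {α : Type*} [TopologicalSpace α] (X : TwoComplexOn α) :
    SimpleGraph (α ⊕ Set α) where
  Adj a b :=
    (∃ v F, a = Sum.inl v ∧ b = Sum.inr F ∧ v ∈ X.cell0 ∧ F ∈ X.cell2 ∧ v ∈ frontier F) ∨
    (∃ v F, b = Sum.inl v ∧ a = Sum.inr F ∧ v ∈ X.cell0 ∧ F ∈ X.cell2 ∧ v ∈ frontier F)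
  symm := by
    constructor
    intro a b h
    rcases h with h | h
    · exact Or.inr h
    · exact Or.inl h
  loopless := by
    constructor
    rintro a (⟨v, F, rfl, h, -⟩ | ⟨v, F, h', h, -⟩)
    · exact absurd h (by simp)
    · rw [h'] at h; exact absurd h (by simp)

/-- The quadrization of a 2-complex: the above bipartite graph with a square
filling each embedded 4-cycle. -/
def quadrization {α : Type*} [TopologicalSpace α] (X : TwoComplexOn α) :
    SquareComplex (α ⊕ Set α) where
  graph := quadGraph X
  squares := {c | IsGraphCycle (quadGraph X) 4 c}

/-! ## Arcs, discs, geodesics, CAT(0) -/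

/-- `s` is an arc from `a` to `b`: a homeomorphic image of `[0,1]`. -/
def IsArc {β : Type*} [TopologicalSpace β] (s : Set β) (a b : β) : Prop :=
  ∃ h : (Set.Icc (0 : ℝ) 1) → β, Topology.IsEmbedding h ∧ Set.range h = s ∧
    h ⟨0, by norm_num⟩ = a ∧ h ⟨1, by norm_num⟩ = b

/-- `F` is a closed disc with boundary circle `B`. -/
def IsClosedDiscWithBoundary {β : Type*} [TopologicalSpace β] (F B : Set β) : Prop :=
  ∃ h : (Metric.closedBall (0 : EPlane) 1) → β, Topology.IsEmbedding h ∧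
    Set.range h = F ∧ h '' {x | ‖(x : EPlane)‖ = 1} = B

/-- A geodesic from `x` to `y`, parametrized by arc length on `[0, dist x y]`. -/
def IsGeodesic {β : Type*} [MetricSpace β] (γ : ℝ → β) (x y : β) : Prop :=
  γ 0 = x ∧ γ (dist x y) = y ∧
    ∀ s ∈ Set.Icc (0 : ℝ) (dist x y), ∀ t ∈ Set.Icc (0 : ℝ) (dist x y),
      dist (γ s) (γ t) = |s - t|

/-- A geodesic metric space. -/
def GeodesicSpace (β : Type*) [MetricSpace β] : Prop :=
  ∀ x y : β, ∃ γ : ℝ → β, IsGeodesic γ x y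

/-- CAT(0): a geodesic space in which geodesic triangles are at least as thin
as their Euclidean comparison triangles; for geodesic spaces this is
equivalent to the CN-inequality of Bruhat–Tits, used here. -/
def IsCAT0 (β : Type*) [MetricSpace β] : Prop :=
  GeodesicSpace β ∧ ∀ x y z m : β,
    dist y m = dist y z / 2 → dist z m = dist y z / 2 →
    dist x m ^ 2 ≤ dist x y ^ 2 / 2 + dist x z ^ 2 / 2 - dist y z ^ 2 / 4
/-! ## Flat planes and quasi-flats in `C(4)-T(4)` complexes -/

/-- A flat plane in the `C(4)-T(4)` sense: a `C(4)-T(4)` complex homeomorphic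
to the Euclidean plane in which every closed 2-cell intersects exactly eight
neighbouring closed 2-cells — four along a single piece and four in a single
vertex — and every 0-cell of valence at least 3 has valence exactly 4. -/
def IsFlatPlane44 {α : Type*} [TopologicalSpace α] (E : TwoComplexOn α) : Prop :=
  E.SatC 4 ∧ E.SatT 4 ∧ Nonempty (↥E.support ≃ₜ (ℝ × ℝ)) ∧
  (∀ F ∈ E.cell2, ∃ Np Nv : Finset (Set α),
    (↑(Np ∪ Nv) : Set (Set α)) = E.neighbors F ∧ Disjoint Np Nv ∧
    Np.card = 4 ∧ Nv.card = 4 ∧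
    (∀ F' ∈ Np, E.IsPiece (F ∩ F')) ∧
    (∀ F' ∈ Nv, ∃ v ∈ E.cell0, F ∩ F' = {v})) ∧
  (∀ v ∈ E.cell0, 3 ≤ E.valence v → E.valence v = 4)

/-- The combinatorial structure of the model complex `𝔛` of Definition 7.4:
`𝔛` is obtained from `𝔛'` — whose 1-skeleton consists of the lines
`ℝ×ℤ×{0}`, `ℤ×ℝ×{1}` and the segments `ℤ×ℤ×[0,1]`, with an octagonal 2-cell
filling each 8-cycle — by collapsing the vertical edges indexed by `A`.
A complex `E` carrying this structure, with underlying space a plane, is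
(cellularly) homeomorphic to `𝔛`. -/
structure QuasiFlatPlaneStruct {β : Type*} [TopologicalSpace β] (E : TwoComplexOn β) where
  /-- the set of collapsed vertical edges -/
  A : Set (ℤ × ℤ)
  /-- bottom vertices `(i,j,0)` -/
  v0 : ℤ × ℤ → β
  /-- top vertices `(i,j,1)` -/
  v1 : ℤ × ℤ → β
  /-- bottom horizontal edges `[i,i+1] × {j} × {0}` -/
  eb : ℤ × ℤ → Set β
  /-- top edges `{i} × [j,j+1] × {1}` -/
  et : ℤ × ℤ → Set β
  /-- vertical edges `{i} × {j} × [0,1]` (possibly collapsed) -/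
  ev : ℤ × ℤ → Set β
  /-- octagonal 2-cells -/
  face : ℤ × ℤ → Set β
  v1_eq : ∀ z ∈ A, v1 z = v0 z
  v0_inj : Function.Injective v0
  face_inj : Function.Injective face
  cell0_eq : E.cell0 = Set.range v0 ∪ Set.range v1
  cell1_eq : E.cell1 = Set.range eb ∪ Set.range et ∪ ev '' Aᶜ
  cell2_eq : E.cell2 = Set.range face
  eb_arc : ∀ i j : ℤ, IsArc (eb (i, j)) (v0 (i, j)) (v0 (i + 1, j))
  et_arc : ∀ i j : ℤ, IsArc (et (i, j)) (v1 (i, j)) (v1 (i, j + 1))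
  ev_arc : ∀ z ∉ A, IsArc (ev z) (v0 z) (v1 z)
  ev_collapsed : ∀ z ∈ A, ev z = {v0 z}
  face_disc : ∀ i j : ℤ, IsClosedDiscWithBoundary (face (i, j))
    (eb (i, j) ∪ et (i + 1, j) ∪ eb (i, j + 1) ∪ et (i, j) ∪
      ev (i, j) ∪ ev (i + 1, j) ∪ ev (i, j + 1) ∪ ev (i + 1, j + 1))
  covers : E.support = ⋃ z : ℤ × ℤ, face z
  plane : Nonempty (↥(⋃ z : ℤ × ℤ, face z) ≃ₜ (ℝ × ℝ))

/-- A quasi-flat plane: a `C(4)-T(4)` complex homeomorphic to the complex `𝔛`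
of Definition 7.4. -/
def IsQuasiFlatPlane {β : Type*} [TopologicalSpace β] (E : TwoComplexOn β) : Prop :=
  E.SatC 4 ∧ E.SatT 4 ∧ Nonempty (QuasiFlatPlaneStruct E)

/-- A quasi-flat in a `C(4)-T(4)` complex `X`: a quasi-flat plane contained in
`X` as a subcomplex whose gallery distances agree with those of `X`. -/
def IsQuasiFlat {α : Type*} [TopologicalSpace α] (X E : TwoComplexOn α) : Prop :=
  E.Subcomplex X ∧ IsQuasiFlatPlane E ∧
    ∀ F ∈ E.cell2, ∀ F' ∈ E.cell2, E.galleryDist F F' = X.galleryDist F F'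

/-! ## Miscellaneous geometry -/

/-- The vertices of a regular `m`-gon inscribed in the unit circle of `ℝ²`. -/
noncomputable def polyVertex (m : ℕ) (i : ZMod m) : ℝ × ℝ :=
  (Real.cos (2 * Real.pi * i.val / m), Real.sin (2 * Real.pi * i.val / m))

/-- A bundled combinatorial 2-complex. -/
structure TwoComplex : Type 1 where
  α : Type
  top : TopologicalSpace α
  complex : @TwoComplexOn α top

attribute [instance] TwoComplex.top
namespace KLargeAux

open Real


noncomputable def pt (θ : ℝ) : ℝ × ℝ := (Real.cos θ, Real.sin θ)

noncomputable def lin (γ : ℝ) (x : ℝ × ℝ) : ℝ := Real.cos γ * x.1 + Real.sin γ * x.2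

lemma lin_pt (γ θ : ℝ) : lin γ (pt θ) = Real.cos (θ - γ) := by
  simp [lin, pt, Real.cos_sub]; ring

lemma lin_smul_add (γ : ℝ) (a b : ℝ) (x y : ℝ × ℝ) :
    lin γ (a • x + b • y) = a * lin γ x + b * lin γ y := by
  simp [lin, Prod.smul_def, smul_eq_mul]; ring

lemma convex_half_ge (γ c : ℝ) : Convex ℝ {x : ℝ × ℝ | c ≤ lin γ x} := by
  intro x hx y hy a b ha hb hab
  simp only [mem_setOf_eq] at *
  rw [lin_smul_add]
  have h3 : a * c + b * c = c := by rw [← add_mul, hab, one_mul]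
  nlinarith [mul_le_mul_of_nonneg_left hx ha, mul_le_mul_of_nonneg_left hy hb]

lemma convex_half_le (γ c : ℝ) : Convex ℝ {x : ℝ × ℝ | lin γ x ≤ c} := by
  intro x hx y hy a b ha hb hab
  simp only [mem_setOf_eq] at *
  rw [lin_smul_add]
  have h3 : a * c + b * c = c := by rw [← add_mul, hab, one_mul]
  nlinarith [mul_le_mul_of_nonneg_left hx ha, mul_le_mul_of_nonneg_left hy hb]

lemma convex_ball' : Convex ℝ {x : ℝ × ℝ | x.1 ^ 2 + x.2 ^ 2 ≤ 1} := by
  intro x hx y hy a b ha hb hab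
  simp only [mem_setOf_eq] at *
  have h1 : (a • x + b • y).1 = a * x.1 + b * y.1 := by simp [Prod.smul_def, smul_eq_mul]
  have h2 : (a • x + b • y).2 = a * x.2 + b * y.2 := by simp [Prod.smul_def, smul_eq_mul]
  rw [h1, h2]
  nlinarith [sq_nonneg (x.1 - y.1), sq_nonneg (x.2 - y.2), mul_nonneg ha hb,
    mul_le_mul_of_nonneg_left hx ha, mul_le_mul_of_nonneg_left hy hb]

lemma interior_subset_lt {S : Set (ℝ × ℝ)} (γ c : ℝ) (hS : S ⊆ {x | c ≤ lin γ x}) :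
    interior S ⊆ {x | c < lin γ x} := by
  intro x hx
  have hxS : x ∈ S := interior_subset hx
  have hcx : c ≤ lin γ x := hS hxS
  rcases lt_or_eq_of_le hcx with h | h
  · exact h
  exfalso
  rcases Metric.mem_nhds_iff.1 (mem_interior_iff_mem_nhds.1 hx) with ⟨ε, hε, hball⟩
  set y : ℝ × ℝ := x - (ε / 2) • (Real.cos γ, Real.sin γ) with hy
  have hyball : y ∈ Metric.ball x ε := by
    rw [Metric.mem_ball, Prod.dist_eq]
    have h1 : dist y.1 x.1 = ε / 2 * |Real.cos γ| := by
      simp only [hy, Prod.fst_sub, Prod.smul_def, smul_eq_mul, Real.dist_eq]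
      rw [show x.1 - ε / 2 * Real.cos γ - x.1 = -(ε / 2 * Real.cos γ) by ring, abs_neg,
        abs_mul, abs_of_pos (by linarith)]
    have h2 : dist y.2 x.2 = ε / 2 * |Real.sin γ| := by
      simp only [hy, Prod.snd_sub, Prod.smul_def, smul_eq_mul, Real.dist_eq]
      rw [show x.2 - ε / 2 * Real.sin γ - x.2 = -(ε / 2 * Real.sin γ) by ring, abs_neg,
        abs_mul, abs_of_pos (by linarith)]
    rw [h1, h2, max_lt_iff]
    have := Real.abs_cos_le_one γ
    have := Real.abs_sin_le_one γ
    have := abs_nonneg (Real.cos γ)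
    have := abs_nonneg (Real.sin γ)
    constructor <;> nlinarith
  have hyS : y ∈ S := hball hyball
  have hcy : c ≤ lin γ y := hS hyS
  have hlin : lin γ y = lin γ x - ε / 2 := by
    simp only [lin, hy, Prod.fst_sub, Prod.snd_sub, Prod.smul_def, smul_eq_mul]
    nlinarith [Real.sin_sq_add_cos_sq γ]
  rw [hlin, ← h] at hcy
  linarith

lemma lin_add_pi (γ : ℝ) (x : ℝ × ℝ) : lin (γ + π) x = -(lin γ x) := by
  simp [lin, Real.cos_add, Real.sin_add]; ring

/-- chord of the unit disc -/
lemma chord (γ d : ℝ) (hd0 : 0 < d) (hdπ : d < π) (x : ℝ × ℝ)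
    (hN : x.1 ^ 2 + x.2 ^ 2 ≤ 1) (hL : lin γ x = Real.cos d) :
    x ∈ segment ℝ (pt (γ - d)) (pt (γ + d)) := by
  have hL' : Real.cos γ * x.1 + Real.sin γ * x.2 = Real.cos d := hL
  set b : ℝ := -Real.sin γ * x.1 + Real.cos γ * x.2 with hb
  have hs0 : 0 < Real.sin d := Real.sin_pos_of_pos_of_lt_pi hd0 hdπ
  have hbb : b ^ 2 ≤ Real.sin d ^ 2 := by
    have key : (Real.cos d) ^ 2 + b ^ 2 = x.1 ^ 2 + x.2 ^ 2 := by
      rw [← hL']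
      linear_combination (x.1 ^ 2 + x.2 ^ 2) * Real.sin_sq_add_cos_sq γ
    nlinarith [Real.sin_sq_add_cos_sq d]
  have hble : -Real.sin d ≤ b ∧ b ≤ Real.sin d := by
    constructor <;> nlinarith
  have hx1 : x.1 = Real.cos γ * Real.cos d - Real.sin γ * b := by
    rw [hb, ← hL']
    linear_combination -x.1 * Real.sin_sq_add_cos_sq γ
  have hx2 : x.2 = Real.sin γ * Real.cos d + Real.cos γ * b := by
    rw [hb, ← hL']
    linear_combination -x.2 * Real.sin_sq_add_cos_sq γ
  refine ⟨(Real.sin d - b) / (2 * Real.sin d), (Real.sin d + b) / (2 * Real.sin d),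
    div_nonneg (by linarith [hble.2]) (by linarith),
    div_nonneg (by linarith [hble.1]) (by linarith), by field_simp; ring, ?_⟩
  have e1 : (((Real.sin d - b) / (2 * Real.sin d)) • pt (γ - d)
      + ((Real.sin d + b) / (2 * Real.sin d)) • pt (γ + d)).1 = x.1 := by
    simp only [pt, Prod.fst_add, Prod.smul_def, smul_eq_mul, Real.cos_sub, Real.cos_add]
    rw [hx1]
    field_simp
    ring
  have e2 : (((Real.sin d - b) / (2 * Real.sin d)) • pt (γ - d)
      + ((Real.sin d + b) / (2 * Real.sin d)) • pt (γ + d)).2 = x.2 := by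
    simp only [pt, Prod.snd_add, Prod.smul_def, smul_eq_mul, Real.sin_sub, Real.sin_add]
    rw [hx2]
    field_simp
    ring
  exact Prod.ext e1 e2

lemma split_half (γ c : ℝ) (p q : ℝ × ℝ) (A B : Set (ℝ × ℝ))
    (hpA : p ∈ A) (hqA : q ∈ A) (hBne : B.Nonempty)
    (hA : ∀ a ∈ A, c ≤ lin γ a) (hB : ∀ b ∈ B, lin γ b ≤ c)
    (hAn : ∀ a ∈ A, a.1 ^ 2 + a.2 ^ 2 ≤ 1) (hBn : ∀ b ∈ B, b.1 ^ 2 + b.2 ^ 2 ≤ 1)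
    (hchord : ∀ x : ℝ × ℝ, x.1 ^ 2 + x.2 ^ 2 ≤ 1 → lin γ x = c → x ∈ segment ℝ p q)
    (x : ℝ × ℝ) (hx : x ∈ convexHull ℝ (A ∪ B)) (hcx : c ≤ lin γ x) :
    x ∈ convexHull ℝ A := by
  have hAhalf : convexHull ℝ A ⊆ {z | c ≤ lin γ z} := convexHull_min hA (convex_half_ge γ c)
  have hBhalf : convexHull ℝ B ⊆ {z | lin γ z ≤ c} := convexHull_min hB (convex_half_le γ c)
  have hAball : convexHull ℝ A ⊆ {z : ℝ × ℝ | z.1 ^ 2 + z.2 ^ 2 ≤ 1} :=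
    convexHull_min hAn convex_ball'
  have hBball : convexHull ℝ B ⊆ {z : ℝ × ℝ | z.1 ^ 2 + z.2 ^ 2 ≤ 1} :=
    convexHull_min hBn convex_ball'
  have hseg : segment ℝ p q ⊆ convexHull ℝ A :=
    (convex_convexHull ℝ A).segment_subset (subset_convexHull ℝ A hpA)
      (subset_convexHull ℝ A hqA)
  rw [convexHull_union ⟨p, hpA⟩ hBne, mem_convexJoin] at hx
  obtain ⟨u, hu, y, hy, a, b, ha, hb, hab, hxe⟩ := hx
  have hlinx : lin γ x = a * lin γ u + b * lin γ y := by rw [← hxe, lin_smul_add]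
  have hℓu : c ≤ lin γ u := hAhalf hu
  have hℓy : lin γ y ≤ c := hBhalf hy
  rcases eq_or_lt_of_le hcx with h0 | hlt
  · -- lin γ x = c : use the chord
    have hNx : x.1 ^ 2 + x.2 ^ 2 ≤ 1 := by
      have : x ∈ {z : ℝ × ℝ | z.1 ^ 2 + z.2 ^ 2 ≤ 1} := by
        rw [← hxe]
        exact convex_ball' (hAball hu) (hBball hy) ha hb hab
      exact this
    exact hseg (hchord x hNx h0.symm)
  rcases eq_or_lt_of_le hb with hb0 | hbpos
  · have : x = u := by
      rw [← hxe, ← hb0, zero_smul, add_zero, show a = 1 by linarith, one_smul]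
    rw [this]; exact hu
  have hℓuc : c < lin γ u := by
    rcases eq_or_lt_of_le hℓu with h | h
    · exfalso
      have : lin γ x ≤ c := by
        rw [hlinx, ← h]
        have hsum : a * c + b * c = c := by rw [← add_mul, hab, one_mul]
        nlinarith [mul_le_mul_of_nonneg_left hℓy hb]
      linarith
    · exact h
  have hden : 0 < lin γ u - lin γ y := by linarith
  set t₀ : ℝ := (lin γ u - c) / (lin γ u - lin γ y) with ht₀
  have ht₀pos : 0 < t₀ := div_pos (by linarith) hden
  have ht₀le : t₀ ≤ 1 := by
    rw [ht₀, div_le_one hden]; linarith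
  set z : ℝ × ℝ := (1 - t₀) • u + t₀ • y with hz
  have hlinz : lin γ z = c := by
    rw [hz, lin_smul_add, ht₀]
    field_simp
    ring
  have hNz : z.1 ^ 2 + z.2 ^ 2 ≤ 1 := by
    have : z ∈ {w : ℝ × ℝ | w.1 ^ 2 + w.2 ^ 2 ≤ 1} :=
      convex_ball' (hAball hu) (hBball hy) (by linarith) (le_of_lt ht₀pos) (by ring)
    exact this
  have hzA : z ∈ convexHull ℝ A := hseg (hchord z hNz hlinz)
  have hbt : b ≤ t₀ := by
    have h1 : c ≤ lin γ u - b * (lin γ u - lin γ y) := by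
      have : a = 1 - b := by linarith
      rw [hlinx, this] at hcx
      linarith [hcx]
    rw [ht₀, le_div_iff₀ hden]
    nlinarith
  have hxuz : x = (1 - b / t₀) • u + (b / t₀) • z := by
    rw [hz, smul_add, smul_smul, smul_smul, ← add_assoc, ← add_smul, ← hxe]
    have ha' : a = 1 - b := by linarith
    have h1 : 1 - b / t₀ + b / t₀ * (1 - t₀) = a := by
      rw [ha']; field_simp; ring
    have h2 : b / t₀ * t₀ = b := by field_simp
    rw [h1, h2]
  have hbt' : b / t₀ ≤ 1 := (div_le_one ht₀pos).2 hbt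
  have : x ∈ segment ℝ u z :=
    ⟨1 - b / t₀, b / t₀, by linarith, div_nonneg hb (le_of_lt ht₀pos), by ring, hxuz.symm⟩
  exact (convex_convexHull ℝ A).segment_subset hu hzA this

lemma split (γ c : ℝ) (p q : ℝ × ℝ) (A B : Set (ℝ × ℝ))
    (hpA : p ∈ A) (hqA : q ∈ A) (hpB : p ∈ B) (hqB : q ∈ B)
    (hA : ∀ a ∈ A, c ≤ lin γ a) (hB : ∀ b ∈ B, lin γ b ≤ c)
    (hAn : ∀ a ∈ A, a.1 ^ 2 + a.2 ^ 2 ≤ 1) (hBn : ∀ b ∈ B, b.1 ^ 2 + b.2 ^ 2 ≤ 1)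
    (hchord : ∀ x : ℝ × ℝ, x.1 ^ 2 + x.2 ^ 2 ≤ 1 → lin γ x = c → x ∈ segment ℝ p q) :
    convexHull ℝ (A ∪ B) = convexHull ℝ A ∪ convexHull ℝ B := by
  apply Subset.antisymm
  · intro x hx
    rcases le_total c (lin γ x) with h | h
    · exact Or.inl (split_half γ c p q A B hpA hqA ⟨p, hpB⟩ hA hB hAn hBn hchord x hx h)
    · refine Or.inr (split_half (γ + π) (-c) p q B A hpB hqB ⟨p, hpA⟩ ?_ ?_ hBn hAn ?_ x ?_ ?_)
      · intro w hw; rw [lin_add_pi]; linarith [hB w hw]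
      · intro w hw; rw [lin_add_pi]; linarith [hA w hw]
      · intro w hw hlw
        rw [lin_add_pi] at hlw
        exact hchord w hw (by linarith)
      · rwa [union_comm]
      · rw [lin_add_pi]; linarith
  · exact union_subset (convexHull_mono subset_union_left) (convexHull_mono subset_union_right)



lemma cos_le_cos_aux {d t : ℝ} (hd0 : 0 ≤ d) (hdπ : d ≤ π) (h1 : d ≤ t) (h2 : t ≤ 2 * π - d) :
    Real.cos t ≤ Real.cos d := by
  rcases le_total t π with h | h
  · exact Real.cos_le_cos_of_nonneg_of_le_pi hd0 h h1
  · rw [← Real.cos_two_pi_sub]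
    exact Real.cos_le_cos_of_nonneg_of_le_pi hd0 (by linarith) (by linarith)

lemma cos_ge_cos_aux {d t : ℝ} (hdπ : d ≤ π) (h : |t| ≤ d) : Real.cos d ≤ Real.cos t := by
  rw [← Real.cos_abs t]
  exact Real.cos_le_cos_of_nonneg_of_le_pi (abs_nonneg t) hdπ h

noncomputable def vtx (m a : ℕ) : ℝ × ℝ := pt (2 * Real.pi * a / m)

lemma vtx_norm (m a : ℕ) : (vtx m a).1 ^ 2 + (vtx m a).2 ^ 2 ≤ 1 := by
  simp only [vtx, pt]
  rw [add_comm]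
  exact le_of_eq (Real.sin_sq_add_cos_sq _)

lemma interior_subset_lt' {S : Set (ℝ × ℝ)} (γ c : ℝ) (hS : S ⊆ {x | lin γ x ≤ c}) :
    interior S ⊆ {x | lin γ x < c} := by
  intro x hx
  have h := interior_subset_lt (γ + π) (-c) (fun w hw => by
    have hw' := hS hw
    simp only [mem_setOf_eq] at hw' ⊢
    rw [lin_add_pi]
    linarith) hx
  simp only [mem_setOf_eq, lin_add_pi] at h ⊢
  linarith

variable {V : Type}

def Rel (X : SimpComplex V) (a b : V) : Prop := a = b ∨ X.Adj a b

lemma Rel.symm' {X : SimpComplex V} {a b : V} (h : Rel X a b) : Rel X b a := by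
  rcases h with rfl | h
  · exact Or.inl rfl
  · exact Or.inr ⟨h.1.symm, by rw [Finset.pair_comm]; exact h.2⟩

lemma rel_adj {X : SimpComplex V} {a b : V} (h : Rel X a b) (hne : a ≠ b) : X.Adj a b :=
  h.resolve_left hne

lemma flag_triple {X : SimpComplex V} {m : ℕ} (hflag : X.Flag) (f : ZMod m → V)
    (hf0 : ∀ i : ZMod m, ({f i} : Finset V) ∈ X.faces)
    (t : Finset (ZMod m)) (ht : t.Nonempty)
    (hpair : ∀ a ∈ t, ∀ b ∈ t, a ≠ b → Rel X (f a) (f b)) :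
    t.image f ∈ X.faces := by
  apply hflag
  · exact ht.image f
  · intro v hv
    rcases Finset.mem_image.1 hv with ⟨a, _, rfl⟩
    exact hf0 a
  · intro u hu v hv huv
    rcases Finset.mem_image.1 hu with ⟨a, ha, rfl⟩
    rcases Finset.mem_image.1 hv with ⟨b, hb, rfl⟩
    have hab : a ≠ b := fun h => huv (by rw [h])
    exact (rel_adj (hpair a ha b hb hab) huv).2

lemma polyVertex_eq_vtx {m a : ℕ} [NeZero m] (ha : a < m) :
    polyVertex m (a : ZMod m) = vtx m a := by
  simp only [polyVertex, vtx, pt, ZMod.val_cast_of_lt ha]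

lemma key (X : SimpComplex V) (k m : ℕ) (hX : X.IsLarge k) (hm : 3 ≤ m) (hmk : m < k)
    (f : ZMod m → V) (hf0 : ∀ i : ZMod m, ({f i} : Finset V) ∈ X.faces)
    (n : ℕ) : 3 ≤ n → ∀ e : ℕ → ℕ,
    (∀ i j, i < j → j < n → e i < e j) → (∀ i, i < n → e i < m) →
    (∀ i, i + 1 < n → Rel X (f ((e i : ZMod m))) (f ((e (i + 1) : ZMod m)))) →
    Rel X (f ((e (n - 1) : ZMod m))) (f ((e 0 : ZMod m))) →
    ∃ T : Finset (Finset (ZMod m)),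
      (∀ s ∈ T, s.card = 3) ∧
      (∀ s ∈ T, s.image f ∈ X.faces) ∧
      (∀ s ∈ T, ∀ x ∈ s, ∃ i, i < n ∧ x = ((e i : ZMod m))) ∧
      (⋃ s ∈ T, convexHull ℝ (polyVertex m '' ↑s)) = convexHull ℝ (vtx m '' (e '' Set.Iio n)) ∧
      (∀ s₁ ∈ T, ∀ s₂ ∈ T, s₁ ≠ s₂ →
        interior (convexHull ℝ (polyVertex m '' ↑s₁)) ∩
          interior (convexHull ℝ (polyVertex m '' ↑s₂)) = ∅) := by
  haveI : NeZero m := ⟨by omega⟩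
  have hmpos : 0 < m := by omega
  have hFinj : ∀ a b : ℕ, a < m → b < m → (a : ZMod m) = (b : ZMod m) → a = b := by
    intro a b ha hb h
    have := congrArg ZMod.val h
    rwa [ZMod.val_cast_of_lt ha, ZMod.val_cast_of_lt hb] at this
  induction n using Nat.strong_induction_on with
  | _ n IH =>
  intro hn3 e emono ebound egood ewrap
  have hge : ∀ i, i < n → i ≤ e i := by
    intro i
    induction i with
    | zero => exact fun _ => Nat.zero_le _
    | succ j ih =>
      intro h
      have h1 := emono j (j + 1) (by omega) h
      have h2 := ih (by omega)
      omega
  have hnm : n ≤ m := by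
    have h1 := hge (n - 1) (by omega)
    have h2 := ebound (n - 1) (by omega)
    omega
  rcases eq_or_lt_of_le hn3 with hn | hn4
  · -- base case n = 3
    subst hn
    have h01 : ((e 0 : ZMod m)) ≠ ((e 1 : ZMod m)) := fun h => by
      have := hFinj _ _ (ebound 0 (by omega)) (ebound 1 (by omega)) h
      have := emono 0 1 (by omega) (by omega); omega
    have h12 : ((e 1 : ZMod m)) ≠ ((e 2 : ZMod m)) := fun h => by
      have := hFinj _ _ (ebound 1 (by omega)) (ebound 2 (by omega)) h
      have := emono 1 2 (by omega) (by omega); omega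
    have h02 : ((e 0 : ZMod m)) ≠ ((e 2 : ZMod m)) := fun h => by
      have := hFinj _ _ (ebound 0 (by omega)) (ebound 2 (by omega)) h
      have := emono 0 2 (by omega) (by omega); omega
    refine ⟨{({((e 0 : ZMod m)), ((e 1 : ZMod m)), ((e 2 : ZMod m))} : Finset (ZMod m))},
      ?_, ?_, ?_, ?_, ?_⟩
    · intro s hs
      rw [Finset.mem_singleton] at hs
      subst hs
      exact Finset.card_eq_three.mpr ⟨_, _, _, h01, h02, h12, rfl⟩
    · intro s hs
      rw [Finset.mem_singleton] at hs
      subst hs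
      have r01 := egood 0 (by omega)
      have r12 := egood 1 (by omega)
      have r20 := ewrap
      apply flag_triple hX.1 f hf0 _ ⟨_, Finset.mem_insert_self _ _⟩
      intro a ha b hb hab
      simp only [Finset.mem_insert, Finset.mem_singleton] at ha hb
      rcases ha with rfl | rfl | rfl <;> rcases hb with rfl | rfl | rfl <;>
        first
          | exact absurd rfl hab
          | exact r01
          | exact r12
          | exact r20
          | exact r01.symm'
          | exact r12.symm'
          | exact r20.symm'
    · intro s hs x hx
      rw [Finset.mem_singleton] at hs
      subst hs
      simp only [Finset.mem_insert, Finset.mem_singleton] at hx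
      rcases hx with rfl | rfl | rfl
      exacts [⟨0, by omega, rfl⟩, ⟨1, by omega, rfl⟩, ⟨2, by omega, rfl⟩]
    · rw [Finset.set_biUnion_singleton]
      congr 1
      have hIio : e '' Set.Iio 3 = {e 0, e 1, e 2} := by
        ext r
        simp only [Set.mem_image, Set.mem_Iio, Set.mem_insert_iff, Set.mem_singleton_iff]
        constructor
        · rintro ⟨i, hi, rfl⟩
          have : i = 0 ∨ i = 1 ∨ i = 2 := by omega
          rcases this with rfl | rfl | rfl <;> tauto
        · rintro (rfl | rfl | rfl)
          exacts [⟨0, by omega, rfl⟩, ⟨1, by omega, rfl⟩, ⟨2, by omega, rfl⟩]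
      rw [hIio]
      simp only [Finset.coe_insert, Finset.coe_singleton, Set.image_insert_eq,
        Set.image_singleton, polyVertex_eq_vtx (ebound 0 (by omega)),
        polyVertex_eq_vtx (ebound 1 (by omega)), polyVertex_eq_vtx (ebound 2 (by omega))]
    · intro s₁ h₁ s₂ h₂ hne
      rw [Finset.mem_singleton] at h₁ h₂
      exact absurd (h₁.trans h₂.symm) hne
  · -- inductive step : n ≥ 4
    obtain ⟨p, q, hpq, hp2, hq2, hqn, hrel⟩ : ∃ p q : ℕ, p < q ∧ p + 2 ≤ q ∧
        q + 2 ≤ p + n ∧ q < n ∧ Rel X (f ((e p : ZMod m))) (f ((e q : ZMod m))) := by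
      by_cases h1 : ∃ p q : ℕ, p < q ∧ p + 2 ≤ q ∧ q + 2 ≤ p + n ∧ q < n ∧
          f ((e p : ZMod m)) = f ((e q : ZMod m))
      · obtain ⟨p, q, a1, a2, a3, a4, a5⟩ := h1
        exact ⟨p, q, a1, a2, a3, a4, Or.inl a5⟩
      by_cases h2 : ∃ i, i + 1 < n ∧ f ((e i : ZMod m)) = f ((e (i + 1) : ZMod m))
      · obtain ⟨i, hi, heq⟩ := h2
        by_cases hi2 : i + 2 < n
        · refine ⟨i, i + 2, by omega, by omega, by omega, hi2, ?_⟩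
          rw [heq]
          exact egood (i + 1) (by omega)
        · have hi' : i = n - 2 := by omega
          refine ⟨0, n - 2, by omega, by omega, by omega, by omega, ?_⟩
          apply Rel.symm'
          have hn1 : n - 2 + 1 = n - 1 := by omega
          rw [hi', hn1] at heq
          rw [heq]
          exact ewrap
      by_cases h3 : f ((e (n - 1) : ZMod m)) = f ((e 0 : ZMod m))
      · refine ⟨1, n - 1, by omega, by omega, by omega, by omega, ?_⟩
        rw [h3]
        exact (egood 0 (by omega)).symm'
      · -- all values distinct: use k-largeness
        have hdist : ∀ i j, i < j → j < n → f ((e i : ZMod m)) ≠ f ((e j : ZMod m)) := by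
          intro i j hij hjn hEq
          by_cases hj : j = i + 1
          · exact h2 ⟨i, by omega, by rw [← hj]; exact hEq⟩
          by_cases hw : i = 0 ∧ j = n - 1
          · obtain ⟨rfl, rfl⟩ := hw
            exact h3 hEq.symm
          · exact h1 ⟨i, j, hij, by omega, by omega, hjn, hEq⟩
        haveI : NeZero n := ⟨by omega⟩
        set c : ZMod n → V := fun t => f ((e t.val : ZMod m)) with hc
        have hcyc : X.IsCycle n c := by
          refine ⟨by omega, ?_, ?_⟩
          · intro t t' h
            by_contra hne
            have hvne : t.val ≠ t'.val := fun hv => hne (ZMod.val_injective n hv)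
            rcases Nat.lt_or_ge t.val t'.val with hlt | hge'
            · exact hdist _ _ hlt (ZMod.val_lt t') h
            · exact hdist _ _ (by omega) (ZMod.val_lt t) h.symm
          · intro t
            have hval : (t + 1).val = (t.val + 1) % n := by
              rw [ZMod.val_add, ZMod.val_one_eq_one_mod,
                Nat.mod_eq_of_lt (show 1 < n by omega)]
            by_cases hlast : t.val + 1 < n
            · have hv : (t + 1).val = t.val + 1 := by rw [hval, Nat.mod_eq_of_lt hlast]
              show X.Adj (f ((e t.val : ZMod m))) (f ((e (t+1).val : ZMod m)))
              rw [hv]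
              exact rel_adj (egood t.val hlast) (hdist t.val (t.val + 1) (by omega) hlast)
            · have htv : t.val = n - 1 := by have := ZMod.val_lt t; omega
              have hv : (t + 1).val = 0 := by
                rw [hval, htv, Nat.sub_add_cancel (by omega), Nat.mod_self]
              show X.Adj (f ((e t.val : ZMod m))) (f ((e (t+1).val : ZMod m)))
              rw [hv, htv]
              exact rel_adj ewrap (hdist 0 (n - 1) (by omega) (by omega)).symm
        obtain ⟨i, j, hj1, hj2, hj3, hadj⟩ := hX.2 n (by omega) (by omega) c hcyc
        have hcast : ∀ t : ZMod n, ((t.val : ℕ) : ZMod n) = t := fun t => by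
          rw [ZMod.natCast_val, ZMod.cast_id]
        have hvne : i.val ≠ j.val := fun h => hj2 (ZMod.val_injective n h).symm
        have hsucc : ¬ (j.val = i.val + 1) := by
          intro h
          apply hj3
          rw [← hcast j, ← hcast i, h]
          push_cast
          ring
        have hpred : ¬ (i.val = j.val + 1) := by
          intro h
          apply hj1
          have hij : i = j + 1 := by
            rw [← hcast i, h]
            push_cast
            rw [hcast j]
          rw [hij]
          ring
        have hn1cast : ((n - 1 : ℕ) : ZMod n) = -1 := by
          rw [Nat.cast_sub (by omega : 1 ≤ n), ZMod.natCast_self, Nat.cast_one]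
          ring
        have hwrap1 : ¬ (i.val = 0 ∧ j.val = n - 1) := by
          rintro ⟨hi0, hjn'⟩
          apply hj1
          rw [← hcast j, ← hcast i, hjn', hi0, hn1cast]
          simp
        have hwrap2 : ¬ (j.val = 0 ∧ i.val = n - 1) := by
          rintro ⟨hj0, hin'⟩
          apply hj3
          rw [← hcast j, ← hcast i, hj0, hin', hn1cast]
          simp
        have hjlt := ZMod.val_lt j
        have hilt := ZMod.val_lt i
        rcases Nat.lt_or_ge i.val j.val with hij | hij
        · exact ⟨i.val, j.val, hij, by omega, by omega, hjlt, Or.inr hadj⟩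
        · exact ⟨j.val, i.val, by omega, by omega, by omega, hilt,
            Rel.symm' (Or.inr hadj)⟩
    -- split along the diagonal (p, q)
    set n₁ := q - p + 1 with hn₁
    set e₁ : ℕ → ℕ := fun i => e (p + i) with he₁
    set n₂ := p + 1 + (n - q) with hn₂
    set e₂ : ℕ → ℕ := fun i => if i ≤ p then e i else e (i + (q - p - 1)) with he₂
    obtain ⟨T₁, hc₁, hfa₁, hs₁, hcov₁, hi₁⟩ := IH n₁ (by omega) (by omega) e₁
      (fun i j hij hj => emono (p + i) (p + j) (by omega) (by omega))
      (fun i hi => ebound _ (by omega))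
      (fun i hi => by
        simpa [he₁, show p + (i + 1) = p + i + 1 from by omega] using egood (p + i) (by omega))
      (by simpa [he₁, show p + (n₁ - 1) = q from by omega,
        show p + (q - p) = q from by omega] using hrel.symm')
    obtain ⟨T₂, hc₂, hfa₂, hs₂, hcov₂, hi₂⟩ := IH n₂ (by omega) (by omega) e₂
      (fun i j hij hj => by
        simp only [he₂]
        split_ifs with hi' hj' hj'
        · exact emono i j hij (by omega)
        · exact emono i (j + (q - p - 1)) (by omega) (by omega)
        · omega
        · exact emono (i + (q - p - 1)) (j + (q - p - 1)) (by omega) (by omega))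
      (fun i hi => by
        simp only [he₂]
        split_ifs with hi'
        · exact ebound _ (by omega)
        · exact ebound _ (by omega))
      (fun i hi => by
        simp only [he₂]
        by_cases h1 : i + 1 ≤ p
        · rw [if_pos (by omega), if_pos h1]
          exact egood i (by omega)
        · by_cases h2 : i ≤ p
          · rw [if_pos h2, if_neg h1, show i + 1 + (q - p - 1) = q from by omega,
              show i = p from by omega]
            exact hrel
          · rw [if_neg h2, if_neg h1,
              show i + 1 + (q - p - 1) = i + (q - p - 1) + 1 from by omega]
            exact egood (i + (q - p - 1)) (by omega))
      (by
        simp only [he₂]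
        rw [if_neg (by omega : ¬ n₂ - 1 ≤ p), if_pos (Nat.zero_le p),
          show n₂ - 1 + (q - p - 1) = n - 1 from by omega]
        exact ewrap)
    -- geometry set-up
    set θ : ℕ → ℝ := fun a => 2 * Real.pi * a / m with hθf
    have hgvtx : ∀ a, vtx m a = pt (θ a) := fun a => rfl
    set α := θ (e p) with hα
    set β := θ (e q) with hβ
    set d := (β - α) / 2 with hd
    set γ := (α + β) / 2 with hγ
    have hπ := Real.pi_pos
    have hmR : (0 : ℝ) < m := by exact_mod_cast hmpos
    have hθmono : ∀ a b : ℕ, a < b → θ a < θ b := by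
      intro a b hab
      simp only [hθf]
      rw [div_lt_div_iff₀ hmR hmR]
      have : (a : ℝ) < b := by exact_mod_cast hab
      nlinarith [Real.pi_pos, mul_pos (mul_pos (by norm_num : (0:ℝ) < 2) Real.pi_pos) hmR]
    have hθnonneg : ∀ a : ℕ, 0 ≤ θ a := by
      intro a
      simp only [hθf]
      positivity
    have hθlt : ∀ a : ℕ, a < m → θ a < 2 * Real.pi := by
      intro a ha
      simp only [hθf]
      rw [div_lt_iff₀ hmR]
      have : (a : ℝ) < m := by exact_mod_cast ha
      nlinarith
    have hθle : ∀ a b : ℕ, a ≤ b → θ a ≤ θ b := by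
      intro a b h
      rcases eq_or_lt_of_le h with rfl | h
      · exact le_refl _
      · exact (hθmono a b h).le
    have hαβ : α < β := hθmono _ _ (emono p q hpq hqn)
    have hβlt : β < 2 * Real.pi := hθlt _ (ebound q hqn)
    have hα0 : 0 ≤ α := hθnonneg _
    have hd0 : 0 < d := by rw [hd]; linarith
    have hdπ : d < Real.pi := by rw [hd]; linarith
    have hγd : γ - d = α := by rw [hγ, hd]; ring
    have hγd' : γ + d = β := by rw [hγ, hd]; ring
    set A : Set (ℝ × ℝ) := vtx m '' (e₁ '' Set.Iio n₁) with hAdef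
    set B : Set (ℝ × ℝ) := vtx m '' (e₂ '' Set.Iio n₂) with hBdef
    have hpA : vtx m (e p) ∈ A :=
      ⟨e p, ⟨0, Set.mem_Iio.mpr (by omega), by simp [he₁]⟩, rfl⟩
    have hqA : vtx m (e q) ∈ A := ⟨e q, ⟨n₁ - 1, Set.mem_Iio.mpr (by omega), by
      simp only [he₁]; rw [show p + (n₁ - 1) = q from by omega]⟩, rfl⟩
    have hpB : vtx m (e p) ∈ B :=
      ⟨e p, ⟨p, Set.mem_Iio.mpr (by omega), by simp [he₂]⟩, rfl⟩
    have hqB : vtx m (e q) ∈ B := ⟨e q, ⟨p + 1, Set.mem_Iio.mpr (by omega), by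
      simp only [he₂]; rw [if_neg (by omega)]; congr 1; omega⟩, rfl⟩
    have hlinA : ∀ w ∈ A, Real.cos d ≤ lin γ w := by
      rintro w ⟨a, ⟨i, hi', rfl⟩, rfl⟩
      have hi : i < n₁ := Set.mem_Iio.mp hi'
      rw [hgvtx, lin_pt]
      apply cos_ge_cos_aux hdπ.le
      have hple : e p ≤ e₁ i := by
        simp only [he₁]
        rcases Nat.eq_zero_or_pos i with rfl | hi0
        · exact le_refl _
        · exact (emono p (p + i) (by omega) (by omega)).le
      have hqge : e₁ i ≤ e q := by
        simp only [he₁]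
        rcases eq_or_lt_of_le (show p + i ≤ q from by omega) with h | h
        · rw [h]
        · exact (emono _ _ h hqn).le
      have h1 : α ≤ θ (e₁ i) := hθle _ _ hple
      have h2 : θ (e₁ i) ≤ β := hθle _ _ hqge
      rw [abs_le]
      constructor <;> [linarith; linarith]
    have hlinB : ∀ w ∈ B, lin γ w ≤ Real.cos d := by
      rintro w ⟨a, ⟨i, hi', rfl⟩, rfl⟩
      have hi : i < n₂ := Set.mem_Iio.mp hi'
      rw [hgvtx, lin_pt]
      by_cases hip : i ≤ p
      · have h1 : θ (e₂ i) ≤ α := by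
          apply hθle
          simp only [he₂, if_pos hip]
          rcases eq_or_lt_of_le (show i ≤ p from hip) with h | h
          · rw [h]
          · exact (emono _ _ h (by omega)).le
        have h0 : 0 ≤ θ (e₂ i) := hθnonneg _
        rw [show θ (e₂ i) - γ = -(γ - θ (e₂ i)) from by ring, Real.cos_neg]
        exact cos_le_cos_aux hd0.le hdπ.le (by linarith) (by linarith)
      · have h1 : β ≤ θ (e₂ i) := by
          apply hθle
          simp only [he₂, if_neg hip]
          rcases eq_or_lt_of_le (show q ≤ i + (q - p - 1) from by omega) with h | h
          · rw [← h]
          · exact (emono _ _ h (by omega)).le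
        have h2 : θ (e₂ i) < 2 * Real.pi := hθlt _ (by
          simp only [he₂, if_neg hip]
          exact ebound _ (by omega))
        exact cos_le_cos_aux hd0.le hdπ.le (by linarith) (by linarith)
    have hnA : ∀ w ∈ A, w.1 ^ 2 + w.2 ^ 2 ≤ 1 := by
      rintro w ⟨a, _, rfl⟩
      exact vtx_norm m a
    have hnB : ∀ w ∈ B, w.1 ^ 2 + w.2 ^ 2 ≤ 1 := by
      rintro w ⟨a, _, rfl⟩
      exact vtx_norm m a
    have hchordAB : ∀ x : ℝ × ℝ, x.1 ^ 2 + x.2 ^ 2 ≤ 1 → lin γ x = Real.cos d →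
        x ∈ segment ℝ (vtx m (e p)) (vtx m (e q)) := by
      intro x hx hl
      have h := chord γ d hd0 hdπ x hx hl
      rwa [hγd, hγd', show pt α = vtx m (e p) from (hgvtx _).symm,
        show pt β = vtx m (e q) from (hgvtx _).symm] at h
    have hsplit := split γ (Real.cos d) (vtx m (e p)) (vtx m (e q)) A B hpA hqA hpB hqB
      hlinA hlinB hnA hnB hchordAB
    have himgU : e₁ '' Set.Iio n₁ ∪ e₂ '' Set.Iio n₂ = e '' Set.Iio n := by
      ext r
      simp only [Set.mem_union, Set.mem_image, Set.mem_Iio]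
      constructor
      · rintro (⟨i, hi, rfl⟩ | ⟨i, hi, rfl⟩)
        · exact ⟨p + i, by omega, by simp [he₁]⟩
        · by_cases hip : i ≤ p
          · exact ⟨i, by omega, by simp [he₂, hip]⟩
          · exact ⟨i + (q - p - 1), by omega, by simp [he₂, hip]⟩
      · rintro ⟨i, hi, rfl⟩
        by_cases h1 : i ≤ p
        · exact Or.inr ⟨i, by omega, by simp [he₂, h1]⟩
        by_cases h2 : i ≤ q
        · refine Or.inl ⟨i - p, by omega, ?_⟩
          simp only [he₁]
          congr 1
          omega
        · refine Or.inr ⟨i - (q - p - 1), by omega, ?_⟩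
          simp only [he₂]
          rw [if_neg (by omega)]
          congr 1
          omega
    have hABu : A ∪ B = vtx m '' (e '' Set.Iio n) := by
      rw [hAdef, hBdef, ← Set.image_union, himgU]
    refine ⟨T₁ ∪ T₂, ?_, ?_, ?_, ?_, ?_⟩
    · intro s hs
      rcases Finset.mem_union.1 hs with h | h
      exacts [hc₁ s h, hc₂ s h]
    · intro s hs
      rcases Finset.mem_union.1 hs with h | h
      exacts [hfa₁ s h, hfa₂ s h]
    · intro s hs x hx
      rcases Finset.mem_union.1 hs with h | h
      · obtain ⟨i, hi, hxe⟩ := hs₁ s h x hx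
        exact ⟨p + i, by omega, by simp [hxe, he₁]⟩
      · obtain ⟨i, hi, hxe⟩ := hs₂ s h x hx
        by_cases hip : i ≤ p
        · exact ⟨i, by omega, by simp [hxe, he₂, hip]⟩
        · exact ⟨i + (q - p - 1), by omega, by simp [hxe, he₂, hip]⟩
    · rw [Finset.set_biUnion_union, hcov₁, hcov₂, ← hsplit, hABu]
    · have hsubA : ∀ s ∈ T₁, polyVertex m '' (↑s : Set (ZMod m)) ⊆ A := by
        intro s hs x hx
        rcases hx with ⟨v, hv, rfl⟩
        obtain ⟨i, hi, rfl⟩ := hs₁ s hs v hv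
        have hb : e₁ i < m := by
          simp only [he₁]
          exact ebound _ (by omega)
        rw [polyVertex_eq_vtx hb]
        exact ⟨e₁ i, ⟨i, Set.mem_Iio.mpr hi, rfl⟩, rfl⟩
      have hsubB : ∀ s ∈ T₂, polyVertex m '' (↑s : Set (ZMod m)) ⊆ B := by
        intro s hs x hx
        rcases hx with ⟨v, hv, rfl⟩
        obtain ⟨i, hi, rfl⟩ := hs₂ s hs v hv
        have hb : e₂ i < m := by
          simp only [he₂]
          split_ifs
          · exact ebound _ (by omega)
          · exact ebound _ (by omega)
        rw [polyVertex_eq_vtx hb]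
        exact ⟨e₂ i, ⟨i, Set.mem_Iio.mpr hi, rfl⟩, rfl⟩
      have hIA : ∀ s ∈ T₁,
          interior (convexHull ℝ (polyVertex m '' (↑s : Set (ZMod m)))) ⊆
            {x | Real.cos d < lin γ x} := by
        intro s hs
        exact (interior_mono (convexHull_mono (hsubA s hs))).trans
          (interior_subset_lt γ _ (convexHull_min hlinA (convex_half_ge γ _)))
      have hIB : ∀ s ∈ T₂,
          interior (convexHull ℝ (polyVertex m '' (↑s : Set (ZMod m)))) ⊆
            {x | lin γ x < Real.cos d} := by
        intro s hs
        exact (interior_mono (convexHull_mono (hsubB s hs))).trans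
          (interior_subset_lt' γ _ (convexHull_min hlinB (convex_half_le γ _)))
      have hcross : ∀ s₁ ∈ T₁, ∀ s₂ ∈ T₂,
          interior (convexHull ℝ (polyVertex m '' (↑s₁ : Set (ZMod m)))) ∩
            interior (convexHull ℝ (polyVertex m '' (↑s₂ : Set (ZMod m)))) = ∅ := by
        intro s₁ h₁ s₂ h₂
        apply Set.eq_empty_iff_forall_notMem.2
        rintro x ⟨hx1, hx2⟩
        have l1 := hIA s₁ h₁ hx1
        have l2 := hIB s₂ h₂ hx2
        simp only [mem_setOf_eq] at l1 l2
        linarith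
      intro s₁ h₁ s₂ h₂ hne
      rcases Finset.mem_union.1 h₁ with h₁' | h₁' <;> rcases Finset.mem_union.1 h₂ with h₂' | h₂'
      · exact hi₁ s₁ h₁' s₂ h₂' hne
      · exact hcross s₁ h₁' s₂ h₂'
      · rw [Set.inter_comm]; exact hcross s₂ h₂' s₁ h₁'
      · exact hi₂ s₁ h₁' s₂ h₂' hne


end KLargeAux

/-- **Lemma 5.2** (Januszkiewicz–Świątkowski, Lemma 1.3).  If `X` is `k`-large
and `m < k`, then every simplicial map `f : S¹_m → X` extends to a simplicial
map from a disc `D²` triangulated with boundary `S¹_m` and without interior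
vertices; equivalently, there is a triangulation of the regular `m`-gon using
only its boundary vertices, each of whose triangles is mapped by `f` to a
simplex of `X`. -/
theorem klarge_extension {V : Type} (X : SimpComplex V) (k m : ℕ)
    (hX : X.IsLarge k) (hm : 3 ≤ m) (hmk : m < k)
    (f : ZMod m → V)
    (hf0 : ∀ i : ZMod m, ({f i} : Finset V) ∈ X.faces)
    (hf : ∀ i : ZMod m, ({f i, f (i + 1)} : Finset V) ∈ X.faces) :
    ∃ T : Finset (Finset (ZMod m)),
      (∀ s ∈ T, s.card = 3) ∧
      (∀ s ∈ T, s.image f ∈ X.faces) ∧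
      (⋃ s ∈ T, convexHull ℝ (polyVertex m '' ↑s)) =
        convexHull ℝ (Set.range (polyVertex m)) ∧
      (∀ s₁ ∈ T, ∀ s₂ ∈ T, s₁ ≠ s₂ →
        interior (convexHull ℝ (polyVertex m '' ↑s₁)) ∩
          interior (convexHull ℝ (polyVertex m '' ↑s₂)) = ∅) := by
  haveI : NeZero m := ⟨by omega⟩
  have hgood : ∀ i : ℕ, i + 1 < m →
      KLargeAux.Rel X (f ((i : ZMod m))) (f (((i + 1 : ℕ) : ZMod m))) := by
    intro i hi
    have h := hf (i : ZMod m)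
    have hcast : ((i + 1 : ℕ) : ZMod m) = (i : ZMod m) + 1 := by push_cast; ring
    rw [hcast]
    by_cases heq : f (i : ZMod m) = f ((i : ZMod m) + 1)
    · exact Or.inl heq
    · exact Or.inr ⟨heq, h⟩
  have hwrap : KLargeAux.Rel X (f (((m - 1 : ℕ) : ZMod m))) (f (((0 : ℕ) : ZMod m))) := by
    have h := hf ((m - 1 : ℕ) : ZMod m)
    have hcast : ((m - 1 : ℕ) : ZMod m) + 1 = ((0 : ℕ) : ZMod m) := by
      have h1 : ((m - 1 : ℕ) : ZMod m) + 1 = ((m - 1 + 1 : ℕ) : ZMod m) := by push_cast; ring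
      rw [h1, show m - 1 + 1 = m from by omega, ZMod.natCast_self, Nat.cast_zero]
    rw [← hcast]
    by_cases heq : f ((m - 1 : ℕ) : ZMod m) = f (((m - 1 : ℕ) : ZMod m) + 1)
    · exact Or.inl heq
    · exact Or.inr ⟨heq, h⟩
  obtain ⟨T, h1, h2, h3, h4, h5⟩ := KLargeAux.key X k m hX hm hmk f hf0 m hm (fun a => a)
    (fun i j hij _ => hij) (fun i hi => hi) hgood hwrap
  have himg : KLargeAux.vtx m '' ((fun a => a) '' Set.Iio m) = Set.range (polyVertex m) := by
    rw [Set.image_id']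
    ext w
    simp only [Set.mem_image, Set.mem_Iio, Set.mem_range]
    constructor
    · rintro ⟨a, ha, rfl⟩
      exact ⟨(a : ZMod m), KLargeAux.polyVertex_eq_vtx ha⟩
    · rintro ⟨i, rfl⟩
      refine ⟨i.val, ZMod.val_lt i, ?_⟩
      rw [← KLargeAux.polyVertex_eq_vtx (ZMod.val_lt i)]
      congr 1
      rw [ZMod.natCast_val, ZMod.cast_id]
  exact ⟨T, h1, h2, by rw [h4, himg], h5⟩
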